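/- Let A be a normal (integrally closed) integral domain, I ⊆ A an ideal, a ∈ A a nonzero element, and J = aI. Then: (a) I is integrally closed if and only if J is integrally closed; (b) I is normal if and only if J is normal. -/

import Mathlib

open Finset Polynomial

/-- `x` is integral over the ideal `I`: it satisfies an equation
`x^m + a₁ x^{m-1} + ⋯ + a_m = 0` with `a_k ∈ I^k`. -/
def IsIntegralOverIdeal {A : Type*} [CommRing A] (I : Ideal A) (x : A) : Prop :=
  ∃ m : ℕ, 0 < m ∧ ∃ a : ℕ → A,
    (∀ k ∈ Finset.Icc 1 m, a k ∈ I ^ k) ∧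
    x ^ m + ∑ k ∈ Finset.Icc 1 m, a k * x ^ (m - k) = 0

/-- An ideal is integrally closed if it contains every element integral over it. -/
def IsIntegrallyClosedIdeal {A : Type*} [CommRing A] (I : Ideal A) : Prop :=
  ∀ x : A, IsIntegralOverIdeal I x → x ∈ I

/-- An ideal is normal if all its positive powers are integrally closed. -/
def IsNormalIdeal {A : Type*} [CommRing A] (I : Ideal A) : Prop :=
  ∀ m : ℕ, 0 < m → IsIntegrallyClosedIdeal (I ^ m)

lemma key_mul {A : Type*} [CommRing A] [IsDomain A] (I : Ideal A) (a : A) (y : A)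
    (hy : IsIntegralOverIdeal I y) : IsIntegralOverIdeal (Ideal.span {a} * I) (a * y) := by
  obtain ⟨m, hm, b, hb, heq⟩ := hy
  refine ⟨m, hm, fun k => a ^ k * b k, fun k hk => ?_, ?_⟩
  · rw [mul_pow, Ideal.span_singleton_pow]
    exact Ideal.mul_mem_mul (Ideal.mem_span_singleton_self _) (hb k hk)
  · have : (a * y) ^ m + ∑ k ∈ Finset.Icc 1 m, a ^ k * b k * (a * y) ^ (m - k)
        = a ^ m * (y ^ m + ∑ k ∈ Finset.Icc 1 m, b k * y ^ (m - k)) := by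
      rw [mul_add, Finset.mul_sum, mul_pow]
      congr 1
      refine Finset.sum_congr rfl fun k hk => ?_
      simp only [Finset.mem_Icc] at hk
      have hpow : a ^ k * a ^ (m - k) = a ^ m := by
        rw [← pow_add]; congr 1; omega
      rw [mul_pow, ← hpow]; ring
    rw [this, heq, mul_zero]

lemma key_div {A : Type*} [CommRing A] [IsDomain A] [IsIntegrallyClosed A]
    (I : Ideal A) (a : A) (ha : a ≠ 0) (x : A)
    (hx : IsIntegralOverIdeal (Ideal.span {a} * I) x) :
    ∃ y, x = a * y ∧ IsIntegralOverIdeal I y := by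
  obtain ⟨m, hm, c, hc, heq⟩ := hx
  -- extract b k with c k = a^k * b k, b k ∈ I^k
  have hex : ∀ k ∈ Finset.Icc 1 m, ∃ z ∈ I ^ k, a ^ k * z = c k := by
    intro k hk
    have := hc k hk
    rw [mul_pow, Ideal.span_singleton_pow, Ideal.mem_span_singleton_mul] at this
    exact this
  choose! b hbI hbc using hex
  set K := FractionRing A
  set f := algebraMap A K with hf
  have hfa : f a ≠ 0 := by
    simpa [hf] using (map_ne_zero_iff f (IsFractionRing.injective A K)).mpr ha
  set ξ : K := f x / f a with hξ
  -- polynomial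
  set p : Polynomial A := X ^ m + ∑ k ∈ Finset.Icc 1 m, C (b k) * X ^ (m - k) with hp
  have hmonic : p.Monic := by
    apply Polynomial.monic_X_pow_add
    apply lt_of_le_of_lt (Polynomial.degree_sum_le _ _)
    rw [Finset.sup_lt_iff (by exact_mod_cast WithBot.bot_lt_coe m)]
    intro k hk
    simp only [Finset.mem_Icc] at hk
    apply lt_of_le_of_lt (Polynomial.degree_C_mul_X_pow_le _ _)
    exact_mod_cast Nat.sub_lt hm hk.1
  have haeval : Polynomial.aeval ξ p = 0 := by
    have key : (f a) ^ m * Polynomial.aeval ξ p = f (x ^ m + ∑ k ∈ Finset.Icc 1 m, c k * x ^ (m - k)) := by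
      simp only [hp, map_add, map_pow, map_sum, map_mul, Polynomial.aeval_X,
        Polynomial.aeval_C, mul_add, Finset.mul_sum]
      congr 1
      · rw [hξ, div_pow, mul_div_cancel₀ _ (pow_ne_zero m hfa)]
      · rw [Finset.mul_sum]; refine Finset.sum_congr rfl fun k hk => ?_
        simp only [Finset.mem_Icc] at hk
        rw [← hbc k (Finset.mem_Icc.mpr hk)]
        simp only [map_mul, map_pow]
        rw [hξ, div_pow]
        have hpow : f a ^ k * f a ^ (m - k) = f a ^ m := by
          rw [← pow_add]; congr 1; omega
        rw [← hpow, mul_div_assoc', mul_div_assoc', div_eq_iff (pow_ne_zero _ hfa)]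
        ring
    rw [heq, map_zero] at key
    exact (mul_eq_zero.mp key).resolve_left (pow_ne_zero m hfa)
  have hint : IsIntegral A ξ := ⟨p, hmonic, haeval⟩
  obtain ⟨y, hy⟩ := IsIntegrallyClosed.isIntegral_iff.mp hint
  have hxy : x = a * y := by
    apply IsFractionRing.injective A K
    rw [map_mul, hy, hξ]
    exact (mul_div_cancel₀ (f x) hfa).symm
  refine ⟨y, hxy, m, hm, b, fun k hk => hbI k hk, ?_⟩
  have h2 : a ^ m * (y ^ m + ∑ k ∈ Finset.Icc 1 m, b k * y ^ (m - k)) = 0 := by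
    rw [← heq, hxy]
    rw [mul_add, Finset.mul_sum, mul_pow]
    congr 1
    refine Finset.sum_congr rfl fun k hk => ?_
    rw [← hbc k hk]
    simp only [Finset.mem_Icc] at hk
    have hpow : a ^ k * a ^ (m - k) = a ^ m := by
      rw [← pow_add]; congr 1; omega
    rw [mul_pow, ← hpow]; ring
  exact (mul_eq_zero.mp h2).resolve_left (pow_ne_zero m ha)


lemma closed_iff {A : Type*} [CommRing A] [IsDomain A] [IsIntegrallyClosed A]
    (I : Ideal A) (a : A) (ha : a ≠ 0) :
    IsIntegrallyClosedIdeal I ↔ IsIntegrallyClosedIdeal (Ideal.span {a} * I) := by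
  constructor
  · intro hI x hx
    obtain ⟨y, rfl, hy⟩ := key_div I a ha x hx
    exact Ideal.mem_span_singleton_mul.mpr ⟨y, hI y hy, rfl⟩
  · intro hJ y hy
    have := hJ (a * y) (key_mul I a y hy)
    obtain ⟨z, hz, hzz⟩ := Ideal.mem_span_singleton_mul.mp this
    rwa [← mul_left_cancel₀ ha hzz]

theorem stmt3 {A : Type*} [CommRing A] [IsDomain A] [IsIntegrallyClosed A]
    (I : Ideal A) (a : A) (ha : a ≠ 0) (J : Ideal A) (hJ : J = Ideal.span {a} * I) :
    (IsIntegrallyClosedIdeal I ↔ IsIntegrallyClosedIdeal J) ∧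
    (IsNormalIdeal I ↔ IsNormalIdeal J) := by
  subst hJ
  refine ⟨closed_iff I a ha, ?_⟩
  unfold IsNormalIdeal
  refine forall_congr' fun m => ?_
  refine imp_congr_right fun hm => ?_
  rw [mul_pow, Ideal.span_singleton_pow]
  exact closed_iff (I ^ m) (a ^ m) (pow_ne_zero m ha)
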